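/- Strong duality for the free min-entropy: if F̂ is a nonempty closed convex cone of PSD matrices, then min{λ ∈ ℝ : λ𝟙 - ρ ∈ F̂*} = max{Tr[ρσ] : σ ∈ F̂, Tr[σ] = 1} for every density matrix ρ (the primal being strictly feasible since F̂* contains all PSD matrices). -/

import Mathlib

open Matrix ComplexOrder

noncomputable section

/-- Trace inner product on matrices: `⟨A, B⟩ = Re Tr[A B]` (real for Hermitian `A`, `B`). -/
def trInner {n : ℕ} (A B : Matrix (Fin n) (Fin n) ℂ) : ℝ := ((A * B).trace).re

/-- A density matrix: positive semidefinite with unit trace. -/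
def IsDensity {n : ℕ} (ρ : Matrix (Fin n) (Fin n) ℂ) : Prop := ρ.PosSemidef ∧ ρ.trace = 1
/-- The dual cone of a set of matrices, inside the real space of Hermitian matrices,
with respect to the trace inner product. -/
def dualCone {n : ℕ} (C : Set (Matrix (Fin n) (Fin n) ℂ)) : Set (Matrix (Fin n) (Fin n) ℂ) :=
  {B | B.IsHermitian ∧ ∀ A ∈ C, 0 ≤ trInner A B}

lemma trInner_comm {n : ℕ} (A B : Matrix (Fin n) (Fin n) ℂ) : trInner A B = trInner B A := by
  unfold trInner; rw [Matrix.trace_mul_comm]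

lemma trInner_expand {n : ℕ} (A ρ : Matrix (Fin n) (Fin n) ℂ) (lam : ℝ) :
    trInner A (lam • (1 : Matrix (Fin n) (Fin n) ℂ) - ρ) = lam * (A.trace).re - trInner A ρ := by
  unfold trInner
  rw [mul_sub, Matrix.mul_smul, mul_one, Matrix.trace_sub, Matrix.trace_smul, Complex.sub_re,
    Complex.smul_re, smul_eq_mul]

lemma trInner_smul_right {n : ℕ} (A B : Matrix (Fin n) (Fin n) ℂ) (t : ℝ) :
    trInner A (t • B) = t * trInner A B := by
  unfold trInner
  rw [Matrix.mul_smul, Matrix.trace_smul, Complex.smul_re, smul_eq_mul]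

lemma trace_conjTranspose_mul_self {n : ℕ} (B : Matrix (Fin n) (Fin n) ℂ) :
    (Bᴴ * B).trace = ((∑ i, ∑ k, ‖B k i‖^2 : ℝ) : ℂ) := by
  simp [Matrix.trace, Matrix.diag, Matrix.mul_apply, Matrix.conjTranspose_apply,
    Complex.conj_mul']

/-- A PSD matrix has real nonnegative trace, and zero real trace forces it to vanish. -/
lemma PosSemidef.trace_facts {n : ℕ} {A : Matrix (Fin n) (Fin n) ℂ} (hA : A.PosSemidef) :
    A.trace = ((A.trace.re : ℝ) : ℂ) ∧ 0 ≤ A.trace.re ∧ (A.trace.re = 0 → A = 0) := by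
  obtain ⟨B, rfl⟩ : ∃ B : Matrix (Fin n) (Fin n) ℂ, A = Bᴴ * B := by
    open MatrixOrder in
    obtain ⟨B, hB⟩ := CStarAlgebra.nonneg_iff_eq_star_mul_self.mp hA.nonneg
    exact ⟨B, hB⟩
  rw [trace_conjTranspose_mul_self]
  have hnn : (0:ℝ) ≤ ∑ i, ∑ k, ‖B k i‖^2 :=
    Finset.sum_nonneg fun i _ => Finset.sum_nonneg fun k _ => sq_nonneg _
  refine ⟨by rw [Complex.ofReal_re], by rw [Complex.ofReal_re]; exact hnn, fun h => ?_⟩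
  rw [Complex.ofReal_re] at h
  have hB : B = 0 := by
    ext k i
    have h1 : ∀ i ∈ Finset.univ, (0:ℝ) ≤ ∑ k, ‖B k i‖^2 :=
      fun i _ => Finset.sum_nonneg fun k _ => sq_nonneg _
    have h2 : ∑ k, ‖B k i‖^2 = 0 := by
      have := (Finset.sum_eq_zero_iff_of_nonneg h1).mp h i (Finset.mem_univ i)
      exact this
    have h3 : ∀ k ∈ Finset.univ, (0:ℝ) ≤ ‖B k i‖^2 := fun k _ => sq_nonneg _
    have := (Finset.sum_eq_zero_iff_of_nonneg h3).mp h2 k (Finset.mem_univ k)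
    simpa [pow_eq_zero_iff] using this
  rw [hB]; simp

/-- Entries of a PSD matrix of trace one are bounded by one in norm. -/
lemma PosSemidef.entry_bound {n : ℕ} {A : Matrix (Fin n) (Fin n) ℂ} (hA : A.PosSemidef)
    (htr : A.trace = 1) (i j : Fin n) : ‖A i j‖ ≤ 1 := by
  obtain ⟨B, rfl⟩ : ∃ B : Matrix (Fin n) (Fin n) ℂ, A = Bᴴ * B := by
    open MatrixOrder in
    obtain ⟨B, hB⟩ := CStarAlgebra.nonneg_iff_eq_star_mul_self.mp hA.nonneg
    exact ⟨B, hB⟩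
  have hsum : ∑ l, ∑ k, ‖B k l‖^2 = 1 := by
    rw [trace_conjTranspose_mul_self] at htr
    exact_mod_cast htr
  have hd : ∀ l : Fin n, ∑ k, ‖B k l‖^2 ≤ 1 := by
    intro l
    rw [← hsum]
    exact Finset.single_le_sum (f := fun m => ∑ k, ‖B k m‖^2)
      (fun m _ => Finset.sum_nonneg fun k _ => sq_nonneg _) (Finset.mem_univ l)
  have happ : (Bᴴ * B) i j = ∑ k, (starRingEnd ℂ) (B k i) * B k j := by
    simp [Matrix.mul_apply, Matrix.conjTranspose_apply]
  calc ‖(Bᴴ * B) i j‖ = ‖∑ k, (starRingEnd ℂ) (B k i) * B k j‖ := by rw [happ]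
    _ ≤ ∑ k, ‖(starRingEnd ℂ) (B k i) * B k j‖ := norm_sum_le _ _
    _ = ∑ k, ‖B k i‖ * ‖B k j‖ := by simp [norm_mul]
    _ ≤ ∑ k, (‖B k i‖^2 + ‖B k j‖^2) / 2 := by
        refine Finset.sum_le_sum fun k _ => ?_
        nlinarith [sq_nonneg (‖B k i‖ - ‖B k j‖)]
    _ = ((∑ k, ‖B k i‖^2) + ∑ k, ‖B k j‖^2) / 2 := by
        rw [← Finset.sum_add_distrib, ← Finset.sum_div]
    _ ≤ (1 + 1) / 2 := by
        have := hd i; have := hd j; linarith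
    _ = 1 := by norm_num

/-- Strong duality for the free min-entropy: for a closed convex cone `F̂` of PSD matrices
with nonempty trace-one base, `min{λ : λ𝟙 - ρ ∈ F̂*} = max{Tr[ρσ] : σ ∈ F̂, Tr σ = 1}`,
both attained. -/
theorem freeMinEntropy_strong_duality (n : ℕ) (F : Set (Matrix (Fin n) (Fin n) ℂ))
    (hclosed : IsClosed F) (hconv : Convex ℝ F)
    (hcone : ∀ (t : ℝ), 0 ≤ t → ∀ A ∈ F, t • A ∈ F)
    (hPSD : ∀ A ∈ F, A.PosSemidef)
    (hbase : ∃ σ ∈ F, σ.trace = 1)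
    (ρ : Matrix (Fin n) (Fin n) ℂ) (hρ : IsDensity ρ) :
    ∃ v : ℝ,
      IsLeast {lam : ℝ | lam • (1 : Matrix (Fin n) (Fin n) ℂ) - ρ ∈ dualCone F} v ∧
      IsGreatest {x : ℝ | ∃ σ ∈ F, σ.trace = 1 ∧ x = trInner ρ σ} v := by
  classical
  -- the base of the cone
  set S : Set (Matrix (Fin n) (Fin n) ℂ) := {σ | σ ∈ F ∧ σ.trace = 1} with hS
  have hSne : S.Nonempty := by
    obtain ⟨σ, hσF, hσtr⟩ := hbase
    exact ⟨σ, hσF, hσtr⟩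
  have hSclosed : IsClosed S :=
    hclosed.inter (isClosed_eq (continuous_id.matrix_trace) continuous_const)
  -- S is compact
  have hK : IsCompact {σ : Matrix (Fin n) (Fin n) ℂ | ∀ i j, ‖σ i j‖ ≤ 1} := by
    have h : {σ : Matrix (Fin n) (Fin n) ℂ | ∀ i j, ‖σ i j‖ ≤ 1} =
        Set.univ.pi (fun _ : Fin n => Set.univ.pi fun _ : Fin n => Metric.closedBall (0:ℂ) 1) := by
      ext σ
      constructor
      · intro hσ i _ j _
        simpa [Metric.mem_closedBall, dist_zero_right] using hσ i j
      · intro hσ i j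
        simpa [Metric.mem_closedBall, dist_zero_right] using
          hσ i (Set.mem_univ i) j (Set.mem_univ j)
    rw [h]
    exact isCompact_univ_pi fun i => isCompact_univ_pi fun j => isCompact_closedBall _ _
  have hScompact : IsCompact S := by
    refine hK.of_isClosed_subset hSclosed ?_
    intro σ hσ i j
    exact PosSemidef.entry_bound (hPSD σ hσ.1) hσ.2 i j
  -- maximize trInner ρ · over S
  have hcont : Continuous fun σ : Matrix (Fin n) (Fin n) ℂ => trInner ρ σ :=
    Complex.continuous_re.comp ((continuous_const.matrix_mul continuous_id).matrix_trace)
  obtain ⟨σ₀, hσ₀S, hmax⟩ := hScompact.exists_isMaxOn hSne hcont.continuousOn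
  set v : ℝ := trInner ρ σ₀ with hv
  refine ⟨v, ⟨?_, ?_⟩, ⟨σ₀, hσ₀S.1, hσ₀S.2, rfl⟩, ?_⟩
  · -- v is feasible
    refine ⟨?_, ?_⟩
    · unfold Matrix.IsHermitian
      rw [Matrix.conjTranspose_sub, Matrix.conjTranspose_smul, Matrix.conjTranspose_one,
        hρ.1.1.eq, star_trivial]
    · intro A hAF
      rw [trInner_expand]
      obtain ⟨htrr, htrnn, htrz⟩ := PosSemidef.trace_facts (hPSD A hAF)
      set t : ℝ := A.trace.re with ht
      rcases eq_or_lt_of_le htrnn with h0 | hpos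
      · -- trace zero : A = 0
        have hA0 : A = 0 := htrz h0.symm
        rw [hA0]
        simp [trInner, ← h0]
      · -- normalize A
        have hmem : t⁻¹ • A ∈ S := by
          refine ⟨hcone t⁻¹ (by positivity) A hAF, ?_⟩
          rw [Matrix.trace_smul, htrr]
          rw [show ((t⁻¹ : ℝ) • ((t:ℝ) : ℂ)) = ((t⁻¹ * t : ℝ) : ℂ) by push_cast; simp [smul_eq_mul]]
          rw [inv_mul_cancel₀ (ne_of_gt hpos)]
          simp
        have hle : trInner ρ (t⁻¹ • A) ≤ v := hmax hmem
        rw [trInner_smul_right] at hle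
        have : trInner ρ A ≤ t * v := by
          have := (inv_mul_le_iff₀ hpos).mp hle
          linarith [this]
        rw [trInner_comm A ρ]
        nlinarith [this]
  · -- v is a lower bound for the feasible set
    intro lam hlam
    have h0 := hlam.2 σ₀ hσ₀S.1
    rw [trInner_expand, hσ₀S.2] at h0
    simp only [Complex.one_re, mul_one] at h0
    rw [trInner_comm σ₀ ρ] at h0
    linarith
  · -- v is an upper bound
    rintro x ⟨σ, hσF, hσtr, rfl⟩
    exact hmax (⟨hσF, hσtr⟩ : σ ∈ S)
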